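/- (i) If S^c is a right extremal column staircase in D with c at most the maximal column height of D, then b(S^c) is right extremal in D relative to ℓ(D). (ii) The remaining right extremal boxes of D are exactly the boxes of the c^i-lower part C_i^L of each right extremal column C_i, except possibly the top box C_i ∩ R_{c^i + 1} of C_i^L, which fails to be right extremal exactly when there exists a right extremal column staircase S^{c^i} of depth c^i in D (necessarily to the right of C_i). -/

import Mathlib

open scoped Classical

/-- height of column `j` of the diagram (columns numbered from 1). -/
def hgt (c : List ℕ) (j : ℕ) : ℕ := c.getD (j - 1) 0

/-- number of boxes in the columns strictly to the left of column `j`. -/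
def off (c : List ℕ) (j : ℕ) : ℕ := (c.take (j - 1)).sum

/-- `(i, j)` (row `i`, column `j`) is a box of the diagram `D`. -/
def IsBox (c : List ℕ) (i j : ℕ) : Prop :=
  1 ≤ j ∧ j ≤ c.length ∧ 1 ≤ i ∧ i ≤ hgt c j

/-- the entry of the box `(i, j)` in the tableau `T`. -/
def Tentry (c : List ℕ) (i j : ℕ) : ℕ := off c j + i

/-- the column of the box of `D` carrying entry `m` in `T`. -/
noncomputable def colOf (c : List ℕ) (m : ℕ) : ℕ := sInf {j | m ≤ (c.take j).sum}

/-- the row of the box of `D` carrying entry `m` in `T`. -/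
noncomputable def rowOf (c : List ℕ) (m : ℕ) : ℕ := m - off c (colOf c m)

/-- the total order `≼` on entries: increasing down columns, then from right to left. -/
def ple (c : List ℕ) (a b : ℕ) : Prop :=
  colOf c b < colOf c a ∨ (colOf c a = colOf c b ∧ a ≤ b)

/-- the strict version of `≼`. -/
def plt (c : List ℕ) (a b : ℕ) : Prop :=
  colOf c b < colOf c a ∨ (colOf c a = colOf c b ∧ a < b)

/-- column `j` has a left neighbour in `D`. -/
def HasLeftNb (c : List ℕ) (j : ℕ) : Prop :=
  ∃ i, 1 ≤ i ∧ i < j ∧ hgt c i = hgt c j ∧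
    ∀ i', i < i' → i' < j → hgt c i' ≠ hgt c j

/-- the `j`-th column of the tableau `T`, rows to optional entries. -/
def Tcol (c : List ℕ) (j : ℕ) : ℕ → Option ℕ := fun i =>
  if 1 ≤ i ∧ i ≤ hgt c j then some (Tentry c i j) else none

/-- one step of the propagation rule building `T(∞)`: the entry (if any) in row `t`
of column `j - 1` of `T(∞)` (given by `prev`) is propagated into the partially
built column `j` (given by `cur`). -/
noncomputable def propStep (c : List ℕ) (j : ℕ) (prev : ℕ → Option ℕ)
    (cur : ℕ → Option ℕ) (t : ℕ) : ℕ → Option ℕ :=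
  match prev t with
  | none => cur
  | some l =>
    if hgt c j = t then
      if HasLeftNb c j ∧ cur (t + 1) = none then
        Function.update cur (t + 1) (some l)
      else cur
    else
      if cur t = none then Function.update cur t (some l) else cur

/-- the `j`-th column of the composition tableau `T(∞)`. -/
noncomputable def TinfCol (c : List ℕ) : ℕ → ℕ → Option ℕ
  | 0 => fun _ => none
  | 1 => Tcol c 1
  | j + 2 =>
      (List.range (c.sum + 2)).foldl
        (propStep c (j + 2) (TinfCol c (j + 1))) (Tcol c (j + 2))

/-- labels of lines: `1` or `∗`. -/
inductive Lab : Type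
  | one : Lab
  | star : Lab
deriving DecidableEq

/-- maximal height among the columns `1, …, j - 1`. -/
def maxHgt (c : List ℕ) (j : ℕ) : ℕ := (c.take (j - 1)).foldr max 0

/-- the maximal column height of the diagram `D`. -/
def maxH (c : List ℕ) : ℕ := c.foldr max 0

/-- `LineB c a i j lab` : the line family `ℓ(D)` contains a line labelled `lab`
whose left end-point is the box of `D` carrying entry `a` in `T` and whose right
end-point is the box `(i, j)` (row `i` of column `C_j`). -/
def LineB (c : List ℕ) (a i j : ℕ) (lab : Lab) : Prop :=
  2 ≤ j ∧ j ≤ c.length ∧ 1 ≤ i ∧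
    (match lab with
     | Lab.one =>
         (maxHgt c j < hgt c j ∧ i ≤ maxHgt c j + 1 ∧ TinfCol c (j - 1) i = some a)
       ∨ (hgt c j ≤ maxHgt c j ∧ i + 1 ≤ hgt c j ∧ TinfCol c (j - 1) i = some a)
       ∨ (hgt c j ≤ maxHgt c j ∧ i = hgt c j ∧
           ¬(∃ j', 1 ≤ j' ∧ j' < j ∧ hgt c j' = hgt c j) ∧
           TinfCol c (j - 1) i = some a)
       ∨ (hgt c j ≤ maxHgt c j ∧ i = hgt c j ∧
           (∃ j', 1 ≤ j' ∧ j' < j ∧ hgt c j' = hgt c j) ∧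
           TinfCol c (j - 1) (i + 1) = some a)
     | Lab.star =>
         hgt c j ≤ maxHgt c j ∧ i = hgt c j ∧
           (∃ j', 1 ≤ j' ∧ j' < j ∧ hgt c j' = hgt c j) ∧
           TinfCol c (j - 1) i = some a)

/-- `LineE c a b lab` : `ℓ(D)` contains a line labelled `lab` joining the box of `D`
carrying entry `a` in `T` (on the left) to the box carrying entry `b` (on the right). -/
def LineE (c : List ℕ) (a b : ℕ) (lab : Lab) : Prop :=
  ∃ i j, LineB c a i j lab ∧ b = Tentry c i j

/-- the box `(i, j)` of `D` is right extremal relative to `ℓ(D)`. -/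
def RExt (c : List ℕ) (i j : ℕ) : Prop :=
  IsBox c i j ∧ ∀ i' j', ¬ LineB c (Tentry c i j) i' j' Lab.one

/-- `c` is a composition of `n`. -/
def IsComposition (c : List ℕ) (n : ℕ) : Prop :=
  c.sum = n ∧ ∀ x ∈ c, 0 < x

/-- a column staircase `S^cc_u` (without the maximality requirement): `col j` is the
index of the column `C'_{i_j}` of height `j`, for `j ∈ [u, cc]`. -/
def IsStair (c : List ℕ) (u cc : ℕ) (col : ℕ → ℕ) : Prop :=
  1 ≤ u ∧ u ≤ cc ∧
  (∀ j, u ≤ j → j ≤ cc →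
     1 ≤ col j ∧ col j ≤ c.length ∧ hgt c (col j) = j ∧ HasLeftNb c (col j)) ∧
  (∀ j, u ≤ j → j < cc → col j < col (j + 1) ∧
     ∀ j', col j < j' → j' < col (j + 1) → hgt c j' < j)

/-- a column staircase `S^cc_u`: a maximal family as above. -/
def IsMaxStair (c : List ℕ) (u cc : ℕ) (col : ℕ → ℕ) : Prop :=
  IsStair c u cc col ∧
  ¬ ∃ u' cc' col', IsStair c u' cc' col' ∧ u' ≤ u ∧ cc ≤ cc' ∧ (u' < u ∨ cc < cc') ∧
      ∀ j, u ≤ j → j ≤ cc → col' j = col j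

/-- the column containing the box `b(S)`, where `cu` is the index of the lowest
(leftmost) column of the staircase `S` of height `u`: the rightmost column of
height `≥ u` strictly to the left of `cu`. -/
noncomputable def stairBoxCol (c : List ℕ) (u cu : ℕ) : ℕ :=
  sSup {j | j < cu ∧ u ≤ hgt c j}

/-- a right extremal column staircase of height `u` and depth `cc`. -/
def RExtStair (c : List ℕ) (u cc : ℕ) (col : ℕ → ℕ) : Prop :=
  IsMaxStair c u cc col ∧ ∀ j', col cc < j' → j' ≤ c.length → hgt c j' < cc

/-- `c^j`: the maximal height of the columns strictly to the right of column `j`. -/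
def cAfter (c : List ℕ) (j : ℕ) : ℕ := (c.drop j).foldr max 0

namespace S15

/-! ### basic list max lemmas -/

lemma le_foldr_max {l : List ℕ} {x : ℕ} (hx : x ∈ l) : x ≤ l.foldr max 0 := by
  induction l with
  | nil => cases hx
  | cons a t ih =>
    rcases List.mem_cons.1 hx with rfl | h
    · exact le_max_left _ _
    · exact le_trans (ih h) (le_max_right _ _)

lemma foldr_max_le {l : List ℕ} {K : ℕ} (h : ∀ x ∈ l, x ≤ K) : l.foldr max 0 ≤ K := by
  induction l with
  | nil => exact Nat.zero_le K
  | cons a t ih =>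
    exact max_le (h a (List.mem_cons_self)) (ih fun x hx => h x (List.mem_cons_of_mem _ hx))

lemma foldr_max_mem {l : List ℕ} (h : 0 < l.foldr max 0) : l.foldr max 0 ∈ l := by
  induction l with
  | nil => simp at h
  | cons a t ih =>
    simp only [List.foldr]
    rcases Nat.le_total (t.foldr max 0) a with hle | hle
    · rw [max_eq_left hle]; exact List.mem_cons_self
    · rw [max_eq_right hle]
      rw [List.foldr] at h
      rw [max_eq_right hle] at h
      exact List.mem_cons_of_mem _ (ih h)

/-! ### hgt / off lemmas -/

lemma hgt_mem {c : List ℕ} {j : ℕ} (h1 : 1 ≤ j) (h2 : j ≤ c.length) : hgt c j ∈ c := by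
  unfold hgt
  rw [List.getD_eq_getElem c 0 (by omega)]
  exact List.getElem_mem _

lemma hgt_eq_zero_of_gt {c : List ℕ} {j : ℕ} (h : c.length < j) : hgt c j = 0 := by
  unfold hgt
  exact List.getD_eq_default c 0 (by omega)

lemma hgt_pos {c : List ℕ} {n : ℕ} (hc : IsComposition c n) {j : ℕ}
    (h1 : 1 ≤ j) (h2 : j ≤ c.length) : 0 < hgt c j :=
  hc.2 _ (hgt_mem h1 h2)

lemma le_length_of_hgt_pos {c : List ℕ} {j : ℕ} (h : 0 < hgt c j) : j ≤ c.length := by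
  by_contra hh
  rw [hgt_eq_zero_of_gt (by omega)] at h
  omega

lemma hgt_le_sum {c : List ℕ} (j : ℕ) : hgt c j ≤ c.sum := by
  unfold hgt
  by_cases h : j - 1 < c.length
  · rw [List.getD_eq_getElem c 0 h]
    exact List.single_le_sum (fun x _ => Nat.zero_le x) _ (List.getElem_mem _)
  · rw [List.getD_eq_default c 0 (by omega)]; exact Nat.zero_le _

lemma off_succ (c : List ℕ) (j : ℕ) (hj : 1 ≤ j) :
    off c (j + 1) = off c j + hgt c j := by
  unfold off hgt
  have : j + 1 - 1 = (j - 1) + 1 := by omega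
  rw [this, List.take_succ, List.sum_append]
  congr 1
  rcases h : (getElem? c (j-1)) with _ | v
  · simp [List.getD]
    rw [List.getElem?_eq_none_iff.2]
    · rfl
    · have := List.getElem?_eq_none_iff.1 h
      omega
  · simp [List.getD]
    have := List.getElem?_eq_some_iff.1 h
    obtain ⟨hlt, hv⟩ := this
    rw [List.getElem?_eq_getElem hlt]
    simp [hv]

lemma sum_take_le_sum_take (c : List ℕ) {a b : ℕ} (h : a ≤ b) :
    (c.take a).sum ≤ (c.take b).sum := by
  have h1 : (c.take b).take a = c.take a := by rw [List.take_take, min_eq_left h]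
  calc (c.take a).sum ≤ (c.take a).sum + ((c.take b).drop a).sum := Nat.le_add_right _ _
  _ = ((c.take b).take a).sum + ((c.take b).drop a).sum := by rw [h1]
  _ = (c.take b).sum := by rw [← List.sum_append, List.take_append_drop]

lemma off_mono (c : List ℕ) {j j' : ℕ} (h : j ≤ j') : off c j ≤ off c j' :=
  sum_take_le_sum_take c (by omega)

end S15
namespace S15

/-- `Ecol c j` : some earlier column has the same height as column `j`. -/
def Ecol (c : List ℕ) (j : ℕ) : Prop := ∃ j', 1 ≤ j' ∧ j' < j ∧ hgt c j' = hgt c j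

lemma hasLeftNb_iff {c : List ℕ} {j : ℕ} : HasLeftNb c j ↔ Ecol c j := by
  constructor
  · rintro ⟨i, h1, h2, h3, _⟩; exact ⟨i, h1, h2, h3⟩
  · rintro ⟨i0, h1, h2, h3⟩
    classical
    set P : ℕ → Prop := fun i => 1 ≤ i ∧ hgt c i = hgt c j with hP
    have hi0 : P i0 := ⟨h1, h3⟩
    have hle : i0 ≤ j - 1 := by omega
    have hspec := Nat.findGreatest_spec hle hi0
    have hle2 : Nat.findGreatest P (j - 1) ≤ j - 1 := Nat.findGreatest_le _
    refine ⟨Nat.findGreatest P (j - 1), hspec.1, by omega, hspec.2, ?_⟩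
    intro i' hgt1 hlt2 heq
    have : ¬ P i' := Nat.findGreatest_is_greatest hgt1 (by omega)
    exact this ⟨by omega, heq⟩

/-! ### maxHgt / cAfter lemmas -/

lemma hgt_le_maxHgt {c : List ℕ} {p j : ℕ} (h1 : 1 ≤ p) (h2 : p < j) :
    hgt c p ≤ maxHgt c j := by
  unfold maxHgt
  by_cases hp : p ≤ c.length
  · apply le_foldr_max
    have : hgt c p = (c.take (j-1))[p-1]'(by
      rw [List.length_take]; omega) := by
      unfold hgt
      rw [List.getD_eq_getElem c 0 (by omega), List.getElem_take]
    rw [this]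
    exact List.getElem_mem _
  · rw [hgt_eq_zero_of_gt (by omega)]; exact Nat.zero_le _

lemma maxHgt_exists {c : List ℕ} {j : ℕ} (h : 0 < maxHgt c j) :
    ∃ p, 1 ≤ p ∧ p < j ∧ hgt c p = maxHgt c j := by
  have hmem : maxHgt c j ∈ c.take (j - 1) := foldr_max_mem h
  obtain ⟨t, ht, hval⟩ := List.getElem_of_mem hmem
  rw [List.length_take] at ht
  refine ⟨t + 1, by omega, by omega, ?_⟩
  unfold hgt
  rw [List.getD_eq_getElem c 0 (by omega)]
  rw [List.getElem_take] at hval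
  simpa using hval

lemma Ecol.hgt_le_maxHgt {c : List ℕ} {j : ℕ} (h : Ecol c j) : hgt c j ≤ maxHgt c j := by
  obtain ⟨p, h1, h2, h3⟩ := h
  rw [← h3]; exact S15.hgt_le_maxHgt h1 h2

lemma hgt_le_cAfter {c : List ℕ} {j p : ℕ} (h1 : j < p) : hgt c p ≤ cAfter c j := by
  unfold cAfter
  by_cases hp : p ≤ c.length
  · apply le_foldr_max
    have : hgt c p = (c.drop j)[p - 1 - j]'(by rw [List.length_drop]; omega) := by
      unfold hgt
      rw [List.getD_eq_getElem c 0 (by omega), List.getElem_drop]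
      congr 1; omega
    rw [this]
    exact List.getElem_mem _
  · rw [hgt_eq_zero_of_gt (by omega)]; exact Nat.zero_le _

lemma cAfter_le {c : List ℕ} {j K : ℕ} (h : ∀ p, j < p → p ≤ c.length → hgt c p ≤ K) :
    cAfter c j ≤ K := by
  unfold cAfter
  apply foldr_max_le
  intro x hx
  obtain ⟨t, ht, hval⟩ := List.getElem_of_mem hx
  rw [List.length_drop] at ht
  have : x = hgt c (j + t + 1) := by
    unfold hgt
    rw [List.getD_eq_getElem c 0 (by omega), ← hval, List.getElem_drop]
    simp
  rw [this]
  exact h _ (by omega) (by omega)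

lemma cAfter_exists {c : List ℕ} {j : ℕ} (h : 0 < cAfter c j) :
    ∃ p, j < p ∧ p ≤ c.length ∧ hgt c p = cAfter c j := by
  have hmem : cAfter c j ∈ c.drop j := foldr_max_mem h
  obtain ⟨t, ht, hval⟩ := List.getElem_of_mem hmem
  rw [List.length_drop] at ht
  refine ⟨j + t + 1, by omega, by omega, ?_⟩
  unfold hgt
  rw [List.getD_eq_getElem c 0 (by omega)]
  rw [List.getElem_drop] at hval
  rw [← hval]
  simp

end S15
namespace S15

open Classical in
/-- intermediate state of the fold building column `j` of `T(∞)`, after steps `0,…,T-1`. -/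
noncomputable def mid (c : List ℕ) (j : ℕ) (prev : ℕ → Option ℕ) (T : ℕ) : ℕ → Option ℕ :=
  fun r =>
  if r = 0 then none
  else if r ≤ hgt c j then some (Tentry c r j)
  else if r = hgt c j + 1 then
    (if hgt c j < T ∧ HasLeftNb c j ∧ prev (hgt c j) ≠ none then prev (hgt c j)
     else if r < T then prev r else none)
  else if r < T then prev r else none

open Classical in
/-- closed form of the propagation rule for one column. -/
noncomputable def nxt (c : List ℕ) (j : ℕ) (prev : ℕ → Option ℕ) : ℕ → Option ℕ :=
  fun r =>
  if r = 0 then none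
  else if r ≤ hgt c j then some (Tentry c r j)
  else if r = hgt c j + 1 then
    (if HasLeftNb c j ∧ prev (hgt c j) ≠ none then prev (hgt c j) else prev r)
  else prev r

lemma mid_apply_zero (c : List ℕ) (j : ℕ) (prev : ℕ → Option ℕ) (T : ℕ) :
    mid c j prev T 0 = none := by unfold mid; simp

lemma mid_apply_low (c : List ℕ) (j : ℕ) (prev : ℕ → Option ℕ) (T : ℕ) {r : ℕ}
    (hr : 1 ≤ r) (h2 : r ≤ hgt c j) :
    mid c j prev T r = some (Tentry c r j) := by
  unfold mid; rw [if_neg (by omega), if_pos h2]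

lemma mid_apply_top (c : List ℕ) (j : ℕ) (prev : ℕ → Option ℕ) (T : ℕ) :
    mid c j prev T (hgt c j + 1) =
      (if hgt c j < T ∧ HasLeftNb c j ∧ prev (hgt c j) ≠ none then prev (hgt c j)
       else if hgt c j + 1 < T then prev (hgt c j + 1) else none) := by
  unfold mid; rw [if_neg (by omega), if_neg (by omega), if_pos rfl]

lemma mid_apply_high (c : List ℕ) (j : ℕ) (prev : ℕ → Option ℕ) (T : ℕ) {r : ℕ}
    (h2 : hgt c j + 2 ≤ r) :
    mid c j prev T r = (if r < T then prev r else none) := by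
  unfold mid; rw [if_neg (by omega), if_neg (by omega), if_neg (by omega)]

/-- rows not touched by step `T` keep their value. -/
lemma mid_agree (c : List ℕ) (j : ℕ) (prev : ℕ → Option ℕ) (T : ℕ) (r : ℕ)
    (hA : r = hgt c j + 1 →
      ((hgt c j < T + 1 ∧ HasLeftNb c j ∧ prev (hgt c j) ≠ none) ↔
       (hgt c j < T ∧ HasLeftNb c j ∧ prev (hgt c j) ≠ none)))
    (hB : r = T → prev T = none ∨ T ≤ hgt c j ∨
      (T = hgt c j + 1 ∧ hgt c j < T ∧ HasLeftNb c j ∧ prev (hgt c j) ≠ none)) :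
    mid c j prev T r = mid c j prev (T + 1) r := by
  rcases Nat.eq_zero_or_pos r with rfl | hr
  · rw [mid_apply_zero, mid_apply_zero]
  · by_cases h1 : r ≤ hgt c j
    · rw [mid_apply_low _ _ _ _ hr h1, mid_apply_low _ _ _ _ hr h1]
    · by_cases h2 : r = hgt c j + 1
      · subst h2
        rw [mid_apply_top, mid_apply_top]
        by_cases hc : hgt c j < T ∧ HasLeftNb c j ∧ prev (hgt c j) ≠ none
        · rw [if_pos hc, if_pos ⟨by omega, hc.2⟩]
        · rw [if_neg hc, if_neg (fun hcc => hc ((hA rfl).1 hcc))]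
          by_cases hb : hgt c j + 1 < T
          · rw [if_pos hb, if_pos (by omega)]
          · rw [if_neg hb]
            by_cases hb1 : hgt c j + 1 < T + 1
            · have hT : hgt c j + 1 = T := by omega
              rw [if_pos hb1]
              rcases hB hT with h | h | h
              · rw [hT, h]
              · omega
              · exact absurd ⟨h.2.1, h.2.2⟩ hc
            · rw [if_neg hb1]
      · have h3 : hgt c j + 2 ≤ r := by omega
        rw [mid_apply_high _ _ _ _ h3, mid_apply_high _ _ _ _ h3]
        by_cases hb : r < T
        · rw [if_pos hb, if_pos (by omega)]
        · rw [if_neg hb]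
          by_cases hb1 : r < T + 1
          · have hT : r = T := by omega
            rw [if_pos hb1]
            rcases hB hT with h | h | h
            · rw [hT, h]
            · omega
            · omega
          · rw [if_neg hb1]

lemma mid_zero (c : List ℕ) (j : ℕ) (prev : ℕ → Option ℕ) (r : ℕ) :
    mid c j prev 0 r = Tcol c j r := by
  unfold Tcol
  rcases Nat.eq_zero_or_pos r with rfl | hr
  · rw [mid_apply_zero, if_neg (by omega)]
  · by_cases h1 : r ≤ hgt c j
    · rw [mid_apply_low _ _ _ _ hr h1, if_pos ⟨hr, h1⟩]
    · rw [if_neg (by omega)]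
      by_cases h2 : r = hgt c j + 1
      · subst h2
        rw [mid_apply_top, if_neg (by omega), if_neg (by omega)]
      · rw [mid_apply_high _ _ _ _ (by omega), if_neg (by omega)]

lemma mid_succ (c : List ℕ) (j : ℕ) (prev : ℕ → Option ℕ) (h0 : prev 0 = none)
    (T : ℕ) (r : ℕ) :
    propStep c j prev (mid c j prev T) T r = mid c j prev (T + 1) r := by
  classical
  rcases hp : prev T with _ | l
  · simp only [propStep, hp]
    apply mid_agree
    · intro _
      constructor
      · rintro ⟨ha, hb⟩
        refine ⟨?_, hb⟩
        rcases Nat.lt_or_ge (hgt c j) T with h | h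
        · exact h
        · exfalso
          have : hgt c j = T := by omega
          exact hb.2 (by rw [this, hp])
      · rintro ⟨ha, hb⟩; exact ⟨by omega, hb⟩
    · intro _; exact Or.inl hp
  · have hT0 : T ≠ 0 := by rintro rfl; rw [h0] at hp; exact nomatch hp
    simp only [propStep, hp]
    by_cases hhT : hgt c j = T
    · rw [if_pos hhT]
      have hcur : mid c j prev T (T + 1) = none := by
        rw [← hhT, mid_apply_top,
          if_neg (by rw [hhT]; rintro ⟨hc, -⟩; exact absurd hc (lt_irrefl T)),
          if_neg (by omega)]
      by_cases hln : HasLeftNb c j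
      · rw [if_pos ⟨hln, hcur⟩]
        by_cases hrT : r = T + 1
        · subst hrT
          rw [Function.update_self, ← hhT, mid_apply_top]
          have hpn : prev (hgt c j) ≠ none := by
            rw [hhT, hp]; exact fun hc => nomatch hc
          rw [if_pos ⟨by omega, hln, hpn⟩, hhT, hp]
        · rw [Function.update_of_ne hrT]
          apply mid_agree
          · intro hc; exact absurd (by omega : r = T + 1) hrT
          · intro _; exact Or.inr (Or.inl (by omega))
      · rw [if_neg (fun hc => hln hc.1)]
        apply mid_agree
        · intro _
          constructor
          · rintro ⟨-, hb, -⟩; exact absurd hb hln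
          · rintro ⟨-, hb, -⟩; exact absurd hb hln
        · intro _; exact Or.inr (Or.inl (by omega))
    · rw [if_neg hhT]
      by_cases h1 : T ≤ hgt c j
      · have hT1 : 1 ≤ T := by omega
        rw [if_neg (by rw [mid_apply_low _ _ _ _ hT1 h1]; exact fun hc => nomatch hc)]
        apply mid_agree
        · intro _
          constructor
          · rintro ⟨ha, hb⟩
            refine ⟨?_, hb⟩
            omega
          · rintro ⟨ha, hb⟩; exact ⟨by omega, hb⟩
        · intro _; exact Or.inr (Or.inl h1)
      · by_cases h2 : T = hgt c j + 1
        · by_cases h3 : HasLeftNb c j ∧ prev (hgt c j) ≠ none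
          · rw [if_neg (by rw [h2, mid_apply_top, if_pos ⟨by omega, h3⟩]; exact h3.2)]
            apply mid_agree
            · intro _
              constructor
              · rintro ⟨-, hb⟩; exact ⟨by omega, hb⟩
              · rintro ⟨-, hb⟩; exact ⟨by omega, hb⟩
            · intro _; exact Or.inr (Or.inr ⟨h2, by omega, h3⟩)
          · rw [if_pos (by
              rw [h2, mid_apply_top, if_neg (fun hc => h3 hc.2), if_neg (by omega)])]
            by_cases hrT : r = T
            · subst hrT
              rw [Function.update_self, h2, mid_apply_top,
                if_neg (fun hc => h3 hc.2), if_pos (by omega), ← h2, hp]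
            · rw [Function.update_of_ne hrT]
              apply mid_agree
              · intro _
                constructor
                · rintro ⟨-, hb⟩; exact absurd hb h3
                · rintro ⟨-, hb⟩; exact absurd hb h3
              · intro hc; exact absurd hc hrT
        · have hTh : hgt c j + 2 ≤ T := by omega
          rw [if_pos (by rw [mid_apply_high _ _ _ _ hTh, if_neg (lt_irrefl T)])]
          by_cases hrT : r = T
          · subst hrT
            rw [Function.update_self, mid_apply_high _ _ _ _ hTh, if_pos (by omega), hp]
          · rw [Function.update_of_ne hrT]
            apply mid_agree
            · intro _
              by_cases h3 : HasLeftNb c j ∧ prev (hgt c j) ≠ none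
              · constructor
                · rintro ⟨-, hb⟩; exact ⟨by omega, hb⟩
                · rintro ⟨-, hb⟩; exact ⟨by omega, hb⟩
              · constructor
                · rintro ⟨-, hb⟩; exact absurd hb h3
                · rintro ⟨-, hb⟩; exact absurd hb h3
            · intro hc; exact absurd hc hrT

end S15
namespace S15

lemma foldl_mid (c : List ℕ) (j : ℕ) (prev : ℕ → Option ℕ) (h0 : prev 0 = none) (N : ℕ) :
    (List.range N).foldl (propStep c j prev) (Tcol c j) = mid c j prev N := by
  induction N with
  | zero =>
    funext r
    rw [List.range_zero, List.foldl_nil, mid_zero]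
  | succ N ih =>
    rw [List.range_succ, List.foldl_append, List.foldl_cons, List.foldl_nil, ih]
    funext r
    exact mid_succ c j prev h0 N r

lemma tinf_zero_col (c : List ℕ) (r : ℕ) : TinfCol c 0 r = none := rfl

lemma tinf_one (c : List ℕ) (r : ℕ) : TinfCol c 1 r = Tcol c 1 r := rfl

lemma tinf_row_zero (c : List ℕ) (m : ℕ) : TinfCol c m 0 = none := by
  induction m using Nat.strong_induction_on with
  | _ m ih =>
    match m with
    | 0 => rfl
    | 1 =>
      rw [tinf_one]
      unfold Tcol
      rw [if_neg (by omega)]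
    | (j + 2) =>
      show ((List.range (c.sum + 2)).foldl (propStep c (j+2) (TinfCol c (j+1))) (Tcol c (j+2))) 0
          = none
      rw [foldl_mid c (j+2) (TinfCol c (j+1)) (ih (j+1) (by omega)) (c.sum+2)]
      exact mid_apply_zero _ _ _ _

lemma tinf_succ_eq_mid (c : List ℕ) (j : ℕ) (hj : 2 ≤ j) :
    TinfCol c j = mid c j (TinfCol c (j - 1)) (c.sum + 2) := by
  obtain ⟨m, rfl⟩ : ∃ m, j = m + 2 := ⟨j - 2, by omega⟩
  show ((List.range (c.sum + 2)).foldl (propStep c (m+2) (TinfCol c (m+2-1))) (Tcol c (m+2)))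
      = _
  exact foldl_mid c (m+2) (TinfCol c (m+2-1)) (tinf_row_zero c (m+2-1)) (c.sum+2)

lemma tinf_high (c : List ℕ) (m : ℕ) {r : ℕ} (hr : c.sum + 2 ≤ r) : TinfCol c m r = none := by
  induction m using Nat.strong_induction_on with
  | _ m ih =>
    match m with
    | 0 => rfl
    | 1 =>
      rw [tinf_one]
      unfold Tcol
      rw [if_neg (by
        rintro ⟨-, hc⟩
        have := hgt_le_sum (c := c) 1
        omega)]
    | (j + 2) =>
      rw [tinf_succ_eq_mid c (j+2) (by omega)]
      have hh : hgt c (j + 2) ≤ c.sum := hgt_le_sum _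
      rw [mid_apply_high _ _ _ _ (by omega), if_neg (by omega)]

/-- The closed form of the propagation: each column of `T(∞)` is obtained from the
previous one by the one-column rule `nxt`. -/
lemma tinf_closed (c : List ℕ) (j : ℕ) (hj : 2 ≤ j) (r : ℕ) :
    TinfCol c j r = nxt c j (TinfCol c (j - 1)) r := by
  rw [tinf_succ_eq_mid c j hj]
  have hh : hgt c j ≤ c.sum := hgt_le_sum _
  unfold nxt
  rcases Nat.eq_zero_or_pos r with rfl | hr
  · rw [mid_apply_zero, if_pos rfl]
  · by_cases h1 : r ≤ hgt c j
    · rw [mid_apply_low _ _ _ _ hr h1, if_neg (by omega), if_pos h1]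
    · by_cases h2 : r = hgt c j + 1
      · subst h2
        conv_lhs => rw [mid_apply_top]
        conv_rhs => rw [if_neg (show ¬(hgt c j + 1 = 0) by omega),
          if_neg (show ¬(hgt c j + 1 ≤ hgt c j) by omega), if_pos rfl]
        by_cases h3 : HasLeftNb c j ∧ TinfCol c (j - 1) (hgt c j) ≠ none
        · rw [if_pos (show hgt c j < c.sum + 2 ∧ HasLeftNb c j ∧
            TinfCol c (j - 1) (hgt c j) ≠ none from ⟨by omega, h3⟩), if_pos h3]
        · rw [if_neg (show ¬(hgt c j < c.sum + 2 ∧ HasLeftNb c j ∧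
              TinfCol c (j - 1) (hgt c j) ≠ none) from fun hc => h3 ⟨hc.2.1, hc.2.2⟩),
            if_neg h3, if_pos (show hgt c j + 1 < c.sum + 2 by omega)]
      · conv_lhs => rw [mid_apply_high _ _ _ _ (show hgt c j + 2 ≤ r by omega)]
        conv_rhs => rw [if_neg (show ¬(r = 0) by omega), if_neg h1, if_neg h2]
        by_cases h4 : r < c.sum + 2
        · rw [if_pos h4]
        · rw [if_neg h4, tinf_high c (j-1) (by omega)]

end S15
namespace S15

open Classical in
/-- one step of the trajectory of an entry: given its row `r` in column `p - 1`
of `T(∞)`, its row in column `p` (or `none` if it is stopped). -/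
noncomputable def trajStep (c : List ℕ) (p : ℕ) (r : ℕ) : Option ℕ :=
  if r = hgt c p ∧ HasLeftNb c p then some (r + 1)
  else if r = hgt c p + 1 then
    (if HasLeftNb c p ∧ TinfCol c (p - 1) (hgt c p) ≠ none then none else some r)
  else if hgt c p + 2 ≤ r then some r
  else none

/-- the trajectory of the entry of box `(i, j)`: its row in each column of `T(∞)`. -/
noncomputable def traj (c : List ℕ) (i j : ℕ) : ℕ → Option ℕ :=
  Nat.rec (if j = 0 then some i else none)
    (fun m prev =>
      if m + 1 < j then none
      else if m + 1 = j then some i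
      else prev.bind (trajStep c (m + 1)))

lemma traj_zero_def (c : List ℕ) (i j : ℕ) :
    traj c i j 0 = (if j = 0 then some i else none) := rfl

lemma traj_succ_def (c : List ℕ) (i j m : ℕ) :
    traj c i j (m + 1) =
      (if m + 1 < j then none
       else if m + 1 = j then some i
       else (traj c i j m).bind (trajStep c (m + 1))) := rfl

lemma traj_of_lt (c : List ℕ) (i : ℕ) {j m : ℕ} (h : m < j) : traj c i j m = none := by
  cases m with
  | zero => rw [traj_zero_def, if_neg (by omega)]
  | succ m => rw [traj_succ_def, if_pos h]

lemma traj_self (c : List ℕ) (i : ℕ) {j : ℕ} (hj : 1 ≤ j) : traj c i j j = some i := by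
  cases j with
  | zero => omega
  | succ m => rw [traj_succ_def, if_neg (by omega), if_pos rfl]

lemma traj_of_gt (c : List ℕ) (i : ℕ) {j m : ℕ} (h : j ≤ m) :
    traj c i j (m + 1) = (traj c i j m).bind (trajStep c (m + 1)) := by
  rw [traj_succ_def, if_neg (by omega), if_neg (by omega)]

lemma traj_ge {c : List ℕ} {i j m r : ℕ} (h : traj c i j m = some r) : j ≤ m := by
  by_contra hc
  rw [traj_of_lt c i (by omega)] at h
  exact nomatch h

lemma trajStep_eq_some_iff {c : List ℕ} {p r x : ℕ} :
    trajStep c p r = some x ↔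
      (r = hgt c p ∧ HasLeftNb c p ∧ x = r + 1) ∨
      (r = hgt c p + 1 ∧ ¬(HasLeftNb c p ∧ TinfCol c (p - 1) (hgt c p) ≠ none) ∧ x = r) ∨
      (hgt c p + 2 ≤ r ∧ x = r) := by
  unfold trajStep
  by_cases h1 : r = hgt c p ∧ HasLeftNb c p
  · obtain ⟨h1a, h1b⟩ := id h1
    rw [if_pos h1]
    constructor
    · intro h
      exact Or.inl ⟨h1a, h1b, (Option.some_inj.1 h).symm⟩
    · rintro (⟨-, -, hx⟩ | ⟨h2, -, -⟩ | ⟨h2, -⟩)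
      · rw [hx]
      · omega
      · omega
  · rw [if_neg h1]
    by_cases h2 : r = hgt c p + 1
    · rw [if_pos h2]
      by_cases h3 : HasLeftNb c p ∧ TinfCol c (p - 1) (hgt c p) ≠ none
      · rw [if_pos h3]
        constructor
        · intro h
          exact nomatch h
        · rintro (⟨h4, h5, -⟩ | ⟨-, h4, -⟩ | ⟨h4, -⟩)
          · exact absurd ⟨h4, h5⟩ h1
          · exact absurd h3 h4
          · omega
      · rw [if_neg h3]
        constructor
        · intro h
          exact Or.inr (Or.inl ⟨h2, h3, (Option.some_inj.1 h).symm⟩)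
        · rintro (⟨h4, h5, -⟩ | ⟨-, -, hx⟩ | ⟨h4, -⟩)
          · exact absurd ⟨h4, h5⟩ h1
          · rw [hx]
          · omega
    · rw [if_neg h2]
      by_cases h4 : hgt c p + 2 ≤ r
      · rw [if_pos h4]
        constructor
        · intro h
          exact Or.inr (Or.inr ⟨h4, (Option.some_inj.1 h).symm⟩)
        · rintro (⟨h5, h6, -⟩ | ⟨h5, -, -⟩ | ⟨-, hx⟩)
          · exact absurd ⟨h5, h6⟩ h1
          · exact absurd h5 h2
          · rw [hx]
      · rw [if_neg h4]
        constructor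
        · intro h
          exact nomatch h
        · rintro (⟨h5, h6, -⟩ | ⟨h5, -, -⟩ | ⟨h5, -⟩)
          · exact absurd ⟨h5, h6⟩ h1
          · exact absurd h5 h2
          · omega

lemma traj_bind_some {c : List ℕ} {i j m x : ℕ} (h : j ≤ m) :
    traj c i j (m + 1) = some x ↔
      ∃ r', traj c i j m = some r' ∧ trajStep c (m + 1) r' = some x := by
  rw [traj_of_gt c i h, Option.bind_eq_some_iff]

/-- all entries of column `m` of `T(∞)` are at most the total size of the first `m` columns. -/
lemma tinf_le {c : List ℕ} : ∀ (m : ℕ) {r v : ℕ}, TinfCol c m r = some v → v ≤ (c.take m).sum := by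
  intro m
  induction m using Nat.strong_induction_on with
  | _ m ih =>
    match m with
    | 0 => intro r v h; simp [TinfCol] at h
    | 1 =>
      intro r v h
      rw [tinf_one] at h
      unfold Tcol at h
      by_cases h1 : 1 ≤ r ∧ r ≤ hgt c 1
      · rw [if_pos h1] at h
        have : v = Tentry c r 1 := (Option.some_inj.1 h).symm
        unfold Tentry off at this
        simp at this
        have h2 : hgt c 1 ≤ (c.take 1).sum := by
          have := off_succ c 1 le_rfl
          unfold off at this
          simp at this
          omega
        omega
      · rw [if_neg h1] at h; exact nomatch h
    | (p + 2) =>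
      intro r v h
      rw [tinf_closed c (p+2) (by omega)] at h
      have hstep : (c.take (p+1)).sum + hgt c (p+2) = (c.take (p+2)).sum := by
        have := off_succ c (p+2) (by omega)
        unfold off at this
        simp only [show p + 2 - 1 = p + 1 from rfl, show p + 2 + 1 - 1 = p + 2 from rfl] at this
        omega
      have hmono : (c.take (p+1)).sum ≤ (c.take (p+2)).sum := sum_take_le_sum_take c (by omega)
      unfold nxt at h
      by_cases h0 : r = 0
      · rw [if_pos h0] at h; exact nomatch h
      · rw [if_neg h0] at h
        by_cases h1 : r ≤ hgt c (p+2)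
        · rw [if_pos h1] at h
          have : v = Tentry c r (p+2) := (Option.some_inj.1 h).symm
          unfold Tentry off at this
          simp only [show p + 2 - 1 = p + 1 from rfl] at this
          omega
        · rw [if_neg h1] at h
          by_cases h2 : r = hgt c (p+2) + 1
          · rw [if_pos h2] at h
            by_cases h3 : HasLeftNb c (p+2) ∧ TinfCol c (p+2-1) (hgt c (p+2)) ≠ none
            · rw [if_pos h3] at h
              exact le_trans (ih (p+1) (by omega) h) hmono
            · rw [if_neg h3] at h
              exact le_trans (ih (p+1) (by omega) h) hmono
          · rw [if_neg h2] at h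
            exact le_trans (ih (p+1) (by omega) h) hmono

end S15
namespace S15

lemma Tentry_le {c : List ℕ} {i j : ℕ} (hbox : IsBox c i j) :
    Tentry c i j ≤ (c.take j).sum := by
  obtain ⟨hj1, hj2, hi1, hi2⟩ := hbox
  have := off_succ c j hj1
  unfold Tentry at *
  unfold off at *
  simp only [Nat.add_sub_cancel] at this
  omega

lemma off_lt_Tentry {c : List ℕ} {i j : ℕ} (hbox : IsBox c i j) :
    (c.take (j-1)).sum < Tentry c i j := by
  obtain ⟨hj1, hj2, hi1, hi2⟩ := hbox
  unfold Tentry off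
  omega

/-- occurrence lemma : the entry of box `(i,j)` occurs in `T(∞)` exactly along its
trajectory. -/
lemma occ {c : List ℕ} {i j : ℕ} (hbox : IsBox c i j) :
    ∀ m r, TinfCol c m r = some (Tentry c i j) ↔ traj c i j m = some r := by
  obtain ⟨hj1, hj2, hi1, hi2⟩ := id hbox
  intro m
  induction m using Nat.strong_induction_on with
  | _ m ih =>
    intro r
    rcases Nat.lt_trichotomy m j with hmj | heq | hmj
    · -- column strictly left of j : the entry occurs nowhere, trajectory empty
      rw [traj_of_lt c i hmj]
      constructor
      · intro h
        exfalso
        have h1 := tinf_le m h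
        have h2 : (c.take m).sum ≤ (c.take (j-1)).sum := sum_take_le_sum_take c (by omega)
        have h3 := off_lt_Tentry hbox
        omega
      · intro h; exact nomatch h
    · -- column j itself
      rw [heq, traj_self c i hj1]
      have hval : ∀ r', TinfCol c (j-1) r' = some (Tentry c i j) → False := by
        intro r' h
        have h1 := tinf_le (j-1) h
        have h3 := off_lt_Tentry hbox
        omega
      rcases Nat.lt_or_ge j 2 with hj2' | hj2'
      · -- j = 1
        have hj : j = 1 := by omega
        subst hj
        rw [tinf_one]
        unfold Tcol
        by_cases h1 : 1 ≤ r ∧ r ≤ hgt c 1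
        · rw [if_pos h1]
          constructor
          · intro h
            have := Option.some_inj.1 h
            unfold Tentry at this
            have : r = i := by omega
            rw [this]
          · intro h
            have : i = r := Option.some_inj.1 h
            subst this
            rfl
        · rw [if_neg h1]
          constructor
          · intro h; exact nomatch h
          · intro h
            have : i = r := Option.some_inj.1 h
            subst this
            omega
      · -- j ≥ 2
        rw [tinf_closed c j hj2']
        unfold nxt
        by_cases h0 : r = 0
        · rw [if_pos h0]
          constructor
          · intro h; exact nomatch h
          · intro h
            have : i = r := Option.some_inj.1 h
            omega
        · rw [if_neg h0]
          by_cases h1 : r ≤ hgt c j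
          · rw [if_pos h1]
            constructor
            · intro h
              have := Option.some_inj.1 h
              unfold Tentry at this
              have : r = i := by omega
              rw [this]
            · intro h
              have : i = r := Option.some_inj.1 h
              subst this
              rfl
          · rw [if_neg h1]
            by_cases h2 : r = hgt c j + 1
            · rw [if_pos h2]
              constructor
              · intro h
                exfalso
                by_cases h3 : HasLeftNb c j ∧ TinfCol c (j-1) (hgt c j) ≠ none
                · rw [if_pos h3] at h; exact hval _ h
                · rw [if_neg h3] at h; exact hval _ h
              · intro h
                have : i = r := Option.some_inj.1 h
                omega
            · rw [if_neg h2]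
              constructor
              · intro h
                exact absurd h (fun h => hval _ h)
              · intro h
                have : i = r := Option.some_inj.1 h
                omega
    · -- column strictly right of j
      obtain ⟨m', rfl⟩ : ∃ m', m = m' + 1 := ⟨m - 1, by omega⟩
      have hjm : j ≤ m' := by omega
      have hIH : ∀ r', TinfCol c m' r' = some (Tentry c i j) ↔ traj c i j m' = some r' :=
        ih m' (by omega)
      rw [tinf_closed c (m'+1) (by omega), traj_bind_some hjm]
      unfold nxt
      simp only [Nat.add_sub_cancel]
      have hoff : Tentry c i j ≤ (c.take m').sum := by
        have h1 := Tentry_le hbox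
        have h2 : (c.take j).sum ≤ (c.take m').sum := sum_take_le_sum_take c hjm
        omega
      by_cases h0 : r = 0
      · rw [if_pos h0]
        constructor
        · intro h; exact nomatch h
        · rintro ⟨r', -, hstep⟩
          rcases trajStep_eq_some_iff.1 hstep with ⟨-, -, hx⟩ | ⟨h4, -, hx⟩ | ⟨h4, hx⟩
          · omega
          · omega
          · omega
      · rw [if_neg h0]
        by_cases h1 : r ≤ hgt c (m'+1)
        · rw [if_pos h1]
          constructor
          · intro h
            exfalso
            have hTe : Tentry c r (m'+1) = Tentry c i j := Option.some_inj.1 h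
            have h5 : (c.take m').sum + r = Tentry c i j := by
              unfold Tentry off at hTe
              simpa [Tentry, off] using hTe
            omega
          · rintro ⟨r', -, hstep⟩
            exfalso
            rcases trajStep_eq_some_iff.1 hstep with ⟨h3, -, hx⟩ | ⟨h4, -, hx⟩ | ⟨h4, hx⟩
            · omega
            · omega
            · omega
          -- (unreachable)
        · rw [if_neg h1]
          by_cases h2 : r = hgt c (m'+1) + 1
          · rw [if_pos h2]
            by_cases h3 : HasLeftNb c (m'+1) ∧ TinfCol c m' (hgt c (m'+1)) ≠ none
            · rw [if_pos h3]
              rw [hIH (hgt c (m'+1))]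
              constructor
              · intro h
                exact ⟨hgt c (m'+1), h, trajStep_eq_some_iff.2 (Or.inl ⟨rfl, h3.1, h2⟩)⟩
              · rintro ⟨r', htr, hstep⟩
                rcases trajStep_eq_some_iff.1 hstep with ⟨h4, -, hx⟩ | ⟨h4, h5, hx⟩ | ⟨h4, hx⟩
                · rw [← h4]; exact htr
                · exact absurd h3 h5
                · omega
            · rw [if_neg h3, h2, hIH (hgt c (m'+1) + 1)]
              constructor
              · intro h
                exact ⟨hgt c (m'+1) + 1, h,
                  trajStep_eq_some_iff.2 (Or.inr (Or.inl ⟨rfl, h3, rfl⟩))⟩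
              · rintro ⟨r', htr, hstep⟩
                rcases trajStep_eq_some_iff.1 hstep with ⟨h4, h5, hx⟩ | ⟨h4, h5, hx⟩ | ⟨h4, hx⟩
                · exfalso
                  rw [h4] at htr
                  have := (hIH (hgt c (m'+1))).2 htr
                  exact h3 ⟨h5, by rw [this]; exact fun hc => nomatch hc⟩
                · rw [← h4]; exact htr
                · omega
          · rw [if_neg h2]
            rw [hIH r]
            constructor
            · intro h
              refine ⟨r, h, trajStep_eq_some_iff.2 (Or.inr (Or.inr ⟨by omega, rfl⟩))⟩
            · rintro ⟨r', htr, hstep⟩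
              rcases trajStep_eq_some_iff.1 hstep with ⟨h4, -, hx⟩ | ⟨h4, -, hx⟩ | ⟨h4, hx⟩
              · omega
              · omega
              · rw [hx]; exact htr

end S15
namespace S15

/-- survival of an entry sitting in row `r` when passing column `p`. -/
def survive (c : List ℕ) (p r : ℕ) : Prop :=
  (r = hgt c p ∧ Ecol c p) ∨ (r = hgt c p + 1 ∧ ¬ Ecol c p) ∨ hgt c p + 2 ≤ r

lemma traj_step_of_survive {c : List ℕ} {i j m r : ℕ} (h : traj c i j m = some r)
    (hs : survive c (m + 1) r) :
    traj c i j (m + 1) = some (if r = hgt c (m + 1) then r + 1 else r) := by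
  have hjm : j ≤ m := traj_ge h
  rw [traj_of_gt c i hjm, h, Option.bind_some]
  unfold trajStep
  rcases hs with ⟨hr, hE⟩ | ⟨hr, hnE⟩ | hr
  · rw [if_pos ⟨hr, hasLeftNb_iff.2 hE⟩, if_pos hr]
  · have hnln : ¬ HasLeftNb c (m + 1) := fun hc => hnE (hasLeftNb_iff.1 hc)
    rw [if_neg (by rintro ⟨hc, hln⟩; exact hnln hln), if_pos hr,
      if_neg (by rintro ⟨hln, -⟩; exact hnln hln), if_neg (by omega)]
  · rw [if_neg (by rintro ⟨hc, -⟩; omega), if_neg (by omega), if_pos hr, if_neg (by omega)]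

lemma traj_pos {c : List ℕ} {i j : ℕ} (hi : 1 ≤ i) :
    ∀ {m r : ℕ}, traj c i j m = some r → 1 ≤ r := by
  intro m r h
  match m with
  | 0 =>
    rw [traj_zero_def] at h
    by_cases h0 : j = 0
    · rw [if_pos h0] at h
      have : i = r := Option.some_inj.1 h
      omega
    · rw [if_neg h0] at h
      exact nomatch h
  | m' + 1 =>
    rw [traj_succ_def] at h
    by_cases h1 : m' + 1 < j
    · rw [if_pos h1] at h
      exact nomatch h
    · rw [if_neg h1] at h
      by_cases h2 : m' + 1 = j
      · rw [if_pos h2] at h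
        have : i = r := Option.some_inj.1 h
        omega
      · rw [if_neg h2] at h
        obtain ⟨r', -, hstep⟩ := Option.bind_eq_some_iff.1 h
        rcases trajStep_eq_some_iff.1 hstep with ⟨-, -, hx⟩ | ⟨h4, -, hx⟩ | ⟨h4, hx⟩
        · omega
        · omega
        · omega

lemma maxHgt_mono (c : List ℕ) {a b : ℕ} (h : a ≤ b) : maxHgt c a ≤ maxHgt c b := by
  unfold maxHgt
  apply foldr_max_le
  intro x hx
  obtain ⟨t, ht, hval⟩ := List.getElem_of_mem hx
  rw [List.length_take] at ht
  apply le_foldr_max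
  rw [List.getElem_take] at hval
  have ht2 : t < min (b - 1) c.length := by omega
  have : (c.take (b-1))[t]'(by rw [List.length_take]; omega) = x := by
    rw [List.getElem_take]; exact hval
  rw [← this]
  exact List.getElem_mem _

lemma traj_le_maxHgt {c : List ℕ} {i j : ℕ} (hbox : IsBox c i j) :
    ∀ {m r : ℕ}, traj c i j m = some r → r ≤ maxHgt c (m + 1) + 1 := by
  obtain ⟨hj1, hj2, hi1, hi2⟩ := hbox
  intro m
  induction m using Nat.strong_induction_on with
  | _ m ih =>
    intro r h
    have hjm : j ≤ m := traj_ge h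
    rcases Nat.eq_or_lt_of_le hjm with heq | hlt
    · rw [← heq, traj_self c i hj1] at h
      have : i = r := Option.some_inj.1 h
      subst this
      have h1 : hgt c j ≤ maxHgt c (m + 1) := hgt_le_maxHgt hj1 (by omega)
      omega
    · obtain ⟨m', rfl⟩ : ∃ m', m = m' + 1 := ⟨m - 1, by omega⟩
      rw [traj_bind_some (by omega)] at h
      obtain ⟨r', htr, hstep⟩ := h
      show r ≤ maxHgt c (m' + 2) + 1
      have hr' : r' ≤ maxHgt c (m' + 1) + 1 := ih m' (by omega) htr
      have hmono : maxHgt c (m' + 1) ≤ maxHgt c (m' + 2) := maxHgt_mono c (by omega)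
      rcases trajStep_eq_some_iff.1 hstep with ⟨h4, -, hx⟩ | ⟨h4, -, hx⟩ | ⟨h4, hx⟩
      · have : hgt c (m' + 1) ≤ maxHgt c (m' + 2) := hgt_le_maxHgt (by omega) (by omega)
        omega
      · omega
      · omega

end S15
namespace S15

lemma lineB_one_iff (c : List ℕ) (a i' j'' : ℕ) :
    LineB c a i' j'' Lab.one ↔ 2 ≤ j'' ∧ j'' ≤ c.length ∧ 1 ≤ i' ∧
      ((maxHgt c j'' < hgt c j'' ∧ i' ≤ maxHgt c j'' + 1 ∧ TinfCol c (j'' - 1) i' = some a)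
       ∨ (hgt c j'' ≤ maxHgt c j'' ∧ i' + 1 ≤ hgt c j'' ∧ TinfCol c (j'' - 1) i' = some a)
       ∨ (hgt c j'' ≤ maxHgt c j'' ∧ i' = hgt c j'' ∧ ¬ Ecol c j'' ∧
            TinfCol c (j'' - 1) i' = some a)
       ∨ (hgt c j'' ≤ maxHgt c j'' ∧ i' = hgt c j'' ∧ Ecol c j'' ∧
            TinfCol c (j'' - 1) (i' + 1) = some a)) :=
  Iff.rfl

/-- The entry of box `(i, j)` is the left end-point of a line labelled `1` iff its
trajectory fails to survive at some column of the diagram. -/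
lemma line_iff {c : List ℕ} {n : ℕ} (hc : IsComposition c n) {i j : ℕ} (hbox : IsBox c i j) :
    (∃ i' j'', LineB c (Tentry c i j) i' j'' Lab.one) ↔
      ∃ m r, traj c i j m = some r ∧ m + 1 ≤ c.length ∧ ¬ survive c (m + 1) r := by
  obtain ⟨hj1, hj2, hi1, hi2⟩ := id hbox
  constructor
  · rintro ⟨i', j'', hl⟩
    rw [lineB_one_iff] at hl
    obtain ⟨hj''2, hj''len, hi'1, hd⟩ := hl
    obtain ⟨m, rfl⟩ : ∃ m, j'' = m + 1 := ⟨j'' - 1, by omega⟩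
    simp only [Nat.add_sub_cancel] at hd
    rcases hd with ⟨hM, hle, hocc⟩ | ⟨hle, hi', hocc⟩ | ⟨hle, hi', hnE, hocc⟩ |
      ⟨hle, hi', hE, hocc⟩
    · refine ⟨m, i', (occ hbox m i').1 hocc, by omega, ?_⟩
      rintro (⟨hr, hE⟩ | ⟨hr, -⟩ | hr)
      · have := Ecol.hgt_le_maxHgt hE
        omega
      · omega
      · omega
    · refine ⟨m, i', (occ hbox m i').1 hocc, by omega, ?_⟩
      rintro (⟨hr, -⟩ | ⟨hr, -⟩ | hr)
      · omega
      · omega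
      · omega
    · refine ⟨m, i', (occ hbox m i').1 hocc, by omega, ?_⟩
      rintro (⟨hr, hE⟩ | ⟨hr, -⟩ | hr)
      · exact hnE hE
      · omega
      · omega
    · refine ⟨m, i' + 1, (occ hbox m (i' + 1)).1 hocc, by omega, ?_⟩
      rintro (⟨hr, -⟩ | ⟨hr, hnE⟩ | hr)
      · omega
      · exact hnE hE
      · omega
  · rintro ⟨m, r, htraj, hlen, hns⟩
    have hjm : j ≤ m := traj_ge htraj
    have hr1 : 1 ≤ r := traj_pos hi1 htraj
    have hocc : TinfCol c (m + 1 - 1) r = some (Tentry c i j) := by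
      simp only [Nat.add_sub_cancel]
      exact (occ hbox m r).2 htraj
    have hrM : r ≤ maxHgt c (m + 1) + 1 := traj_le_maxHgt hbox htraj
    by_cases hM : maxHgt c (m + 1) < hgt c (m + 1)
    · exact ⟨r, m + 1, (lineB_one_iff c _ r (m + 1)).2
        ⟨by omega, hlen, hr1, Or.inl ⟨hM, hrM, hocc⟩⟩⟩
    · have hC : r < hgt c (m + 1) + 2 := by
        by_contra hcc
        exact hns (Or.inr (Or.inr (by omega)))
      rcases lt_trichotomy r (hgt c (m + 1)) with hlt | heq | hgt'
      · exact ⟨r, m + 1, (lineB_one_iff c _ r (m + 1)).2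
          ⟨by omega, hlen, hr1, Or.inr (Or.inl ⟨by omega, by omega, hocc⟩)⟩⟩
      · have hnE : ¬ Ecol c (m + 1) := fun hE => hns (Or.inl ⟨heq, hE⟩)
        exact ⟨r, m + 1, (lineB_one_iff c _ r (m + 1)).2
          ⟨by omega, hlen, hr1, Or.inr (Or.inr (Or.inl ⟨by omega, heq, hnE, hocc⟩))⟩⟩
      · have hreq : r = hgt c (m + 1) + 1 := by omega
        have hE : Ecol c (m + 1) := by
          by_contra hnE
          exact hns (Or.inr (Or.inl ⟨hreq, hnE⟩))
        have hpos : 1 ≤ hgt c (m + 1) := hgt_pos hc (by omega) hlen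
        refine ⟨hgt c (m + 1), m + 1, (lineB_one_iff c _ _ (m + 1)).2
          ⟨by omega, hlen, hpos, Or.inr (Or.inr (Or.inr ⟨?_, rfl, hE, ?_⟩))⟩⟩
        · exact Ecol.hgt_le_maxHgt hE
        · rw [← hreq]
          exact hocc

end S15

namespace S15

/-- Right-extremality of a box in terms of the survival of its trajectory. -/
lemma rext_iff {c : List ℕ} {n : ℕ} (hc : IsComposition c n) {i j : ℕ} (hbox : IsBox c i j) :
    RExt c i j ↔ ∀ m r, traj c i j m = some r → m + 1 ≤ c.length → survive c (m + 1) r := by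
  unfold RExt
  constructor
  · rintro ⟨-, hno⟩ m r htraj hlen
    by_contra hns
    obtain ⟨i', j'', hl⟩ := (line_iff hc hbox).2 ⟨m, r, htraj, hlen, hns⟩
    exact hno i' j'' hl
  · intro hs
    refine ⟨hbox, fun i' j'' hl => ?_⟩
    obtain ⟨m, r, htraj, hlen, hns⟩ := (line_iff hc hbox).1 ⟨i', j'', hl⟩
    exact hns (hs m r htraj hlen)

end S15
namespace S15

lemma part_i {c : List ℕ} {n : ℕ} (hc : IsComposition c n) {u cc : ℕ} {col : ℕ → ℕ}
    (hms : IsMaxStair c u cc col)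
    (hre : ∀ j', col cc < j' → j' ≤ c.length → hgt c j' < cc) :
    RExt c u (stairBoxCol c u (col u)) := by
  obtain ⟨hst, hmax⟩ := hms
  obtain ⟨hu1, hucc, hcols, hgaps⟩ := hst
  -- the left neighbour of `col u`
  obtain ⟨p0, hp01, hp0lt, hp0h⟩ := hasLeftNb_iff.1 (hcols u le_rfl hucc).2.2.2
  rw [(hcols u le_rfl hucc).2.2.1] at hp0h
  -- the box b(S)
  set S : Set ℕ := {p | p < col u ∧ u ≤ hgt c p} with hS
  have hSbdd : BddAbove S := ⟨col u, fun p hp => le_of_lt hp.1⟩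
  have hSne : S.Nonempty := ⟨p0, hp0lt, le_of_eq hp0h.symm⟩
  set q := stairBoxCol c u (col u) with hq
  have hqS : q ∈ S := Nat.sSup_mem hSne hSbdd
  have hq_max : ∀ p, p ∈ S → p ≤ q := fun p hp => le_csSup hSbdd hp
  have hq1 : 1 ≤ q := le_trans hp01 (hq_max p0 ⟨hp0lt, le_of_eq hp0h.symm⟩)
  have hqlen : q ≤ c.length := le_length_of_hgt_pos (by
    have := hqS.2
    omega)
  have hboxq : IsBox c u q := ⟨hq1, hqlen, hu1, hqS.2⟩
  have hbetween : ∀ p, q < p → p < col u → hgt c p < u := by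
    intro p h1 h2
    by_contra hcc
    have : p ∈ S := ⟨h2, by omega⟩
    exact absurd (hq_max p this) (by omega)
  -- no column of height u-1 strictly between q and col u has an earlier column of
  -- equal height (otherwise the staircase would extend downwards)
  have hNoE : ∀ p, q < p → p < col u → hgt c p = u - 1 → 2 ≤ u → ¬ Ecol c p := by
    intro p hp1 hp2 hph hu2 hE
    set S2 : Set ℕ := {p' | q < p' ∧ p' < col u ∧ hgt c p' = u - 1} with hS2
    have hS2bdd : BddAbove S2 := ⟨col u, fun x hx => le_of_lt hx.2.1⟩
    have hS2ne : S2.Nonempty := ⟨p, hp1, hp2, hph⟩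
    set ps := sSup S2 with hps
    have hpsS : ps ∈ S2 := Nat.sSup_mem hS2ne hS2bdd
    have hps_max : ∀ x, x ∈ S2 → x ≤ ps := fun x hx => le_csSup hS2bdd hx
    have hps1 : q < ps := hpsS.1
    have hps2 : ps < col u := hpsS.2.1
    have hps3 : hgt c ps = u - 1 := hpsS.2.2
    have hppos : p ≤ ps := hps_max p ⟨hp1, hp2, hph⟩
    have hpsE : Ecol c ps := by
      rcases eq_or_lt_of_le hppos with heq | hlt
      · rw [← heq]; exact hE
      · exact ⟨p, by omega, hlt, by rw [hph, hpsS.2.2]⟩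
    have hLN : HasLeftNb c ps := hasLeftNb_iff.2 hpsE
    set col2 : ℕ → ℕ := fun t => if t = u - 1 then ps else col t with hcol2
    have hstair2 : IsStair c (u-1) cc col2 := by
      refine ⟨by omega, by omega, ?_, ?_⟩
      · intro t ht1 ht2
        by_cases h : t = u - 1
        · have : col2 t = ps := by rw [hcol2]; simp [h]
          rw [this, h]
          exact ⟨by omega, le_length_of_hgt_pos (by omega), by omega, hLN⟩
        · have : col2 t = col t := by rw [hcol2]; simp [h]
          rw [this]
          exact hcols t (by omega) ht2
      · intro t ht1 ht2
        by_cases h : t = u - 1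
        · have e1 : col2 t = ps := by rw [hcol2]; simp [h]
          have e2 : col2 (t + 1) = col u := by
            simp only [hcol2, show t + 1 = u by omega]
            rw [if_neg (by omega)]
          rw [e1, e2]
          refine ⟨by omega, ?_⟩
          intro p' hp'1 hp'2
          have hlt : hgt c p' < u := hbetween p' (by omega) hp'2
          have : hgt c p' ≠ u - 1 := by
            intro hcc
            have : p' ∈ S2 := ⟨by omega, hp'2, hcc⟩
            exact absurd (hps_max p' this) (by omega)
          omega
        · have e1 : col2 t = col t := by rw [hcol2]; simp [h]
          have e2 : col2 (t + 1) = col (t + 1) := by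
            simp only [hcol2]
            rw [if_neg (by omega)]
          rw [e1, e2, show t = t by rfl]
          exact hgaps t (by omega) ht2
    exact hmax ⟨u - 1, cc, col2, hstair2, by omega, le_rfl, Or.inl (by omega),
      fun t ht1 ht2 => by simp only [hcol2]; rw [if_neg (by omega)]⟩
  -- the inductive step: survival and the shape of the trajectory
  have stepS : ∀ m r, q ≤ m → m + 1 ≤ c.length →
      ((m < col u ∧ traj c u q m = some u) ∨
       (∃ t, u ≤ t ∧ t ≤ cc ∧ col t ≤ m ∧ (t < cc → m < col (t+1)) ∧
         traj c u q m = some (t+1))) →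
      traj c u q m = some r →
      survive c (m + 1) r ∧
      ((m + 1 < col u ∧ traj c u q (m+1) = some u) ∨
       (∃ t, u ≤ t ∧ t ≤ cc ∧ col t ≤ m + 1 ∧ (t < cc → m + 1 < col (t+1)) ∧
         traj c u q (m+1) = some (t+1))) := by
    rintro m r hqm hlen (⟨hmlt, htr⟩ | ⟨t, ht1, ht2, ht3, ht4, htr⟩) htr'
    · have hru : u = r := by
        rw [htr] at htr'
        exact Option.some_inj.1 htr'
      subst hru
      rcases lt_trichotomy (m+1) (col u) with hc1 | hc1 | hc1
      · have hh : hgt c (m+1) < u := hbetween (m+1) (by omega) hc1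
        have hpos : 1 ≤ hgt c (m+1) := hgt_pos hc (by omega) hlen
        by_cases hcase : u = hgt c (m+1) + 1
        · have hnE := hNoE (m+1) (by omega) hc1 (by omega) (by omega)
          have hs : survive c (m+1) u := Or.inr (Or.inl ⟨hcase, hnE⟩)
          refine ⟨hs, Or.inl ⟨hc1, ?_⟩⟩
          have h2 := traj_step_of_survive htr hs
          rw [if_neg (by omega)] at h2
          exact h2
        · have hs : survive c (m+1) u := Or.inr (Or.inr (by omega))
          refine ⟨hs, Or.inl ⟨hc1, ?_⟩⟩
          have h2 := traj_step_of_survive htr hs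
          rw [if_neg (by omega)] at h2
          exact h2
      · have hhu : hgt c (m+1) = u := by rw [hc1]; exact (hcols u le_rfl hucc).2.2.1
        have hE : Ecol c (m+1) := hasLeftNb_iff.1 (by
          rw [hc1]; exact (hcols u le_rfl hucc).2.2.2)
        have hs : survive c (m+1) u := Or.inl ⟨hhu.symm, hE⟩
        have h2 := traj_step_of_survive htr hs
        rw [if_pos hhu.symm] at h2
        refine ⟨hs, Or.inr ⟨u, le_rfl, hucc, by omega, ?_, h2⟩⟩
        intro hultcc
        have := (hgaps u le_rfl hultcc).1
        omega
      · omega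
    · have hru : t + 1 = r := by
        rw [htr] at htr'
        exact Option.some_inj.1 htr'
      subst hru
      by_cases htc : t = cc
      · subst htc
        have hh : hgt c (m+1) < t := hre (m+1) (by omega) hlen
        have hs : survive c (m+1) (t+1) := Or.inr (Or.inr (by omega))
        have h2 := traj_step_of_survive htr hs
        rw [if_neg (by omega)] at h2
        exact ⟨hs, Or.inr ⟨t, ht1, le_rfl, by omega,
          fun h => absurd h (lt_irrefl t), h2⟩⟩
      · have htcc : t < cc := by omega
        have hm1le : m + 1 ≤ col (t+1) := ht4 htcc
        rcases eq_or_lt_of_le hm1le with heq | hlt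
        · have hhu : hgt c (m+1) = t + 1 := by
            rw [heq]; exact (hcols (t+1) (by omega) (by omega)).2.2.1
          have hE : Ecol c (m+1) := hasLeftNb_iff.1 (by
            rw [heq]; exact (hcols (t+1) (by omega) (by omega)).2.2.2)
          have hs : survive c (m+1) (t+1) := Or.inl ⟨hhu.symm, hE⟩
          have h2 := traj_step_of_survive htr hs
          rw [if_pos hhu.symm] at h2
          refine ⟨hs, Or.inr ⟨t+1, by omega, by omega, by omega, ?_, h2⟩⟩
          intro ht1cc
          have := (hgaps (t+1) (by omega) ht1cc).1
          omega
        · have hh : hgt c (m+1) < t := (hgaps t ht1 htcc).2 (m+1) (by omega) hlt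
          have hs : survive c (m+1) (t+1) := Or.inr (Or.inr (by omega))
          have h2 := traj_step_of_survive htr hs
          rw [if_neg (by omega)] at h2
          exact ⟨hs, Or.inr ⟨t, ht1, ht2, by omega, fun h => by omega, h2⟩⟩
  -- the invariant holds along the whole trajectory
  have key : ∀ m, q ≤ m → m ≤ c.length →
      ((m < col u ∧ traj c u q m = some u) ∨
       (∃ t, u ≤ t ∧ t ≤ cc ∧ col t ≤ m ∧ (t < cc → m < col (t+1)) ∧
         traj c u q m = some (t+1))) := by
    intro m hqm
    induction m, hqm using Nat.le_induction with
    | base =>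
      intro _
      exact Or.inl ⟨hqS.1, traj_self c u hq1⟩
    | succ m hqm ih =>
      intro hlen
      have hInv := ih (by omega)
      rcases hInv with ⟨h1, h2⟩ | ⟨t, h1, h2, h3, h4, h5⟩
      · exact (stepS m u hqm (by omega) (Or.inl ⟨h1, h2⟩) h2).2
      · exact (stepS m (t+1) hqm (by omega) (Or.inr ⟨t, h1, h2, h3, h4, h5⟩) h5).2
  rw [rext_iff hc hboxq]
  intro m r htraj hlen
  have hqm : q ≤ m := traj_ge htraj
  exact (stepS m r hqm hlen (key m hqm (by omega)) htraj).1

end S15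
namespace S15

lemma traj_step_bounds {c : List ℕ} {i j p r r' : ℕ} (hp : 1 ≤ p)
    (h1 : traj c i j (p - 1) = some r) (h2 : traj c i j p = some r') :
    r ≤ r' ∧ r' ≤ r + 1 := by
  have hjm : j ≤ p - 1 := traj_ge h1
  obtain ⟨m, rfl⟩ : ∃ m, p = m + 1 := ⟨p - 1, by omega⟩
  simp only [Nat.add_sub_cancel] at h1
  rw [traj_of_gt c i (by omega), h1, Option.bind_some] at h2
  rcases trajStep_eq_some_iff.1 h2 with ⟨-, -, hx⟩ | ⟨-, -, hx⟩ | ⟨-, hx⟩ <;> omega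

lemma traj_bump {c : List ℕ} {i j p r : ℕ} (hp : 1 ≤ p)
    (h1 : traj c i j (p - 1) = some r) (h2 : traj c i j p = some (r + 1)) :
    hgt c p = r ∧ HasLeftNb c p := by
  have hjm : j ≤ p - 1 := traj_ge h1
  obtain ⟨m, rfl⟩ : ∃ m, p = m + 1 := ⟨p - 1, by omega⟩
  simp only [Nat.add_sub_cancel] at h1
  rw [traj_of_gt c i (by omega), h1, Option.bind_some] at h2
  rcases trajStep_eq_some_iff.1 h2 with ⟨ha, hb, -⟩ | ⟨-, -, hx⟩ | ⟨-, hx⟩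
  · exact ⟨ha.symm, hb⟩
  · omega
  · omega

/-- greedy construction of a right extremal column staircase of depth `d`, topped by
the column `C`. -/
lemma build_stair {c : List ℕ} {n : ℕ} (hc : IsComposition c n) {d C : ℕ} (hd : 1 ≤ d)
    (hClen : C ≤ c.length) (hCh : hgt c C = d) (hCE : Ecol c C)
    (hright : ∀ p, C < p → p ≤ c.length → hgt c p < d) :
    ∃ u col, RExtStair c u d col := by
  suffices h : ∀ u, ∀ col : ℕ → ℕ, 1 ≤ u → u ≤ d → IsStair c u d col → col d = C →
      ∃ u' col', RExtStair c u' d col' by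
    refine h d (fun _ => C) hd le_rfl ⟨hd, le_rfl, ?_, ?_⟩ rfl
    · intro t ht1 ht2
      have ht' : t = d := by omega
      subst ht'
      obtain ⟨p', hp'1, hp'2, hp'3⟩ := hCE
      exact ⟨show 1 ≤ C by omega, hClen, hCh, hasLeftNb_iff.2 ⟨p', hp'1, hp'2, hp'3⟩⟩
    · intro t ht1 ht2
      omega
  intro u
  induction u using Nat.strong_induction_on with
  | _ u ih =>
    intro col hu1 hud hstair hcold
    obtain ⟨-, -, hcols, hgaps⟩ := id hstair
    by_cases hext : ∃ p, 2 ≤ u ∧ 1 ≤ p ∧ p < col u ∧ hgt c p = u - 1 ∧ HasLeftNb c p ∧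
        ∀ p', p < p' → p' < col u → hgt c p' < u - 1
    · obtain ⟨p, hu2, hp1, hp2, hp3, hp4, hp5⟩ := hext
      set col2 : ℕ → ℕ := fun t => if t = u - 1 then p else col t with hcol2
      have hstair2 : IsStair c (u-1) d col2 := by
        refine ⟨by omega, by omega, ?_, ?_⟩
        · intro t ht1 ht2
          by_cases h : t = u - 1
          · have e1 : col2 t = p := by simp only [hcol2]; rw [if_pos h]
            rw [e1, h]
            exact ⟨hp1, le_length_of_hgt_pos (by omega), hp3, hp4⟩
          · have e1 : col2 t = col t := by simp only [hcol2]; rw [if_neg h]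
            rw [e1]
            exact hcols t (by omega) ht2
        · intro t ht1 ht2
          by_cases h : t = u - 1
          · have e1 : col2 t = p := by simp only [hcol2]; rw [if_pos h]
            have e2 : col2 (t + 1) = col u := by
              simp only [hcol2, show t + 1 = u by omega]
              rw [if_neg (by omega)]
            rw [e1, e2]
            refine ⟨hp2, ?_⟩
            intro p' h1 h2
            have := hp5 p' h1 h2
            omega
          · have e1 : col2 t = col t := by simp only [hcol2]; rw [if_neg h]
            have e2 : col2 (t + 1) = col (t + 1) := by
              simp only [hcol2]; rw [if_neg (by omega)]
            rw [e1, e2]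
            exact hgaps t (by omega) ht2
      have hcold2 : col2 d = C := by
        simp only [hcol2]
        rw [if_neg (by omega), hcold]
      exact ih (u - 1) (by omega) col2 (by omega) (by omega) hstair2 hcold2
    · refine ⟨u, col, ⟨⟨hstair, ?_⟩, ?_⟩⟩
      · rintro ⟨u', cc', col', hst', hu'u, hdcc', hlt, hagree⟩
        obtain ⟨hu'1, -, hcols', hgaps'⟩ := id hst'
        rcases hlt with hlt | hlt
        · -- downward extension exists : contradicts the choice of `u`
          apply hext
          refine ⟨col' (u - 1), by omega, (hcols' (u-1) (by omega) (by omega)).1, ?_,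
            (hcols' (u-1) (by omega) (by omega)).2.2.1, (hcols' (u-1) (by omega) (by omega)).2.2.2,
            ?_⟩
          · have h1 := (hgaps' (u-1) (by omega) (by omega)).1
            have h2 : col' (u - 1 + 1) = col u := by
              rw [show u - 1 + 1 = u by omega]
              exact hagree u le_rfl hud
            omega
          · intro p' h1 h2
            have h3 := (hgaps' (u-1) (by omega) (by omega)).2 p' h1 (by
              have h2' : col' (u - 1 + 1) = col u := by
                rw [show u - 1 + 1 = u by omega]
                exact hagree u le_rfl hud
              omega)
            exact h3
        · -- upward extension exists : contradicts right extremality of `C`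
          have h1 := (hgaps' d (by omega) (by omega)).1
          have h2 := (hcols' (d+1) (by omega) (by omega)).2.1
          have h3 := (hcols' (d+1) (by omega) (by omega)).2.2.1
          have h4 : col' d = C := by rw [hagree d hud le_rfl, hcold]
          have := hright (col' (d+1)) (by omega) h2
          omega
      · intro j' h1 h2
        rw [hcold] at h1
        exact hright j' h1 h2

end S15
namespace S15

lemma part_ii_bwd {c : List ℕ} {n : ℕ} (hc : IsComposition c n) {i j : ℕ}
    (hbox : IsBox c i j)
    (hA : cAfter c j < hgt c j) (hB : cAfter c j < i)
    (hC : i = cAfter c j + 1 → ¬ ∃ u col, RExtStair c u (cAfter c j) col) :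
    RExt c i j := by
  obtain ⟨hj1, hj2, hi1, hi2⟩ := id hbox
  have stepS : ∀ m, j ≤ m → m + 1 ≤ c.length → survive c (m+1) i ∧ hgt c (m+1) ≠ i := by
    intro m hjm hlen
    have hle : hgt c (m+1) ≤ cAfter c j := hgt_le_cAfter (by omega)
    by_cases hcase : hgt c (m+1) + 2 ≤ i
    · exact ⟨Or.inr (Or.inr hcase), by omega⟩
    · have heq : hgt c (m+1) = i - 1 := by omega
      have hieq : i = cAfter c j + 1 := by omega
      have hnE : ¬ Ecol c (m+1) := by
        intro hE
        set S : Set ℕ := {p | p ≤ c.length ∧ hgt c p = cAfter c j} with hS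
        have hSne : S.Nonempty := ⟨m+1, hlen, by omega⟩
        have hSbdd : BddAbove S := ⟨c.length, fun x hx => hx.1⟩
        set Cs := sSup S with hCs
        have hCsS : Cs ∈ S := Nat.sSup_mem hSne hSbdd
        have hCs_max : ∀ x, x ∈ S → x ≤ Cs := fun x hx => le_csSup hSbdd hx
        have hCsge : m + 1 ≤ Cs := hCs_max (m+1) ⟨hlen, by omega⟩
        have hCsE : Ecol c Cs := by
          rcases eq_or_lt_of_le hCsge with heq2 | hlt2
          · rw [← heq2]
            obtain ⟨p', h1, h2, h3⟩ := hE
            exact ⟨p', h1, h2, h3⟩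
          · exact ⟨m+1, by omega, hlt2, by
              have := hCsS.2
              omega⟩
        have hCsright : ∀ p, Cs < p → p ≤ c.length → hgt c p < cAfter c j := by
          intro p h1 h2
          have h3 : hgt c p ≤ cAfter c j := hgt_le_cAfter (by omega)
          rcases eq_or_lt_of_le h3 with heq3 | hlt3
          · exact absurd (hCs_max p ⟨h2, heq3⟩) (by omega)
          · exact hlt3
        have hd1 : 1 ≤ cAfter c j := by
          have := hgt_pos hc (show 1 ≤ m + 1 by omega) hlen
          omega
        exact hC hieq (build_stair hc hd1 hCsS.1 hCsS.2 hCsE hCsright)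
      exact ⟨Or.inr (Or.inl ⟨by omega, hnE⟩), by omega⟩
  have key : ∀ m, j ≤ m → m ≤ c.length → traj c i j m = some i := by
    intro m hjm
    induction m, hjm using Nat.le_induction with
    | base => intro _; exact traj_self c i hj1
    | succ m hjm ih =>
      intro hlen
      have htr := ih (by omega)
      obtain ⟨hs, hne⟩ := stepS m hjm hlen
      have h2 := traj_step_of_survive htr hs
      rw [if_neg (fun hcc => hne hcc.symm)] at h2
      exact h2
  rw [rext_iff hc hbox]
  intro m r htraj hlen
  have hjm : j ≤ m := traj_ge htraj
  have := key m hjm (by omega)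
  have hri : i = r := by
    rw [this] at htraj
    exact Option.some_inj.1 htraj
  subst hri
  exact (stepS m hjm hlen).1

end S15
namespace S15

lemma part_ii_fwd {c : List ℕ} {n : ℕ} (hc : IsComposition c n) {i j : ℕ}
    (hbox : IsBox c i j)
    (hni : ¬ ∃ u cc col, RExtStair c u cc col ∧ i = u ∧ j = stairBoxCol c u (col u))
    (hrext : RExt c i j) :
    cAfter c j < hgt c j ∧ cAfter c j < i ∧
      (i = cAfter c j + 1 → ¬ ∃ u col, RExtStair c u (cAfter c j) col) := by
  obtain ⟨hj1, hj2, hi1, hi2⟩ := id hbox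
  have hs := (rext_iff hc hbox).1 hrext
  -- the trajectory stays alive on the whole diagram
  have alive : ∀ m, j ≤ m → m ≤ c.length → ∃ r, traj c i j m = some r := by
    intro m hjm
    induction m, hjm using Nat.le_induction with
    | base => intro _; exact ⟨i, traj_self c i hj1⟩
    | succ m hjm ih =>
      intro hlen
      obtain ⟨r, hr⟩ := ih (by omega)
      exact ⟨_, traj_step_of_survive hr (hs m r hr hlen)⟩
  -- rows are nondecreasing
  have mono : ∀ p p', j ≤ p → p ≤ p' → p' ≤ c.length → ∀ rp rp',
      traj c i j p = some rp → traj c i j p' = some rp' → rp ≤ rp' := by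
    intro p p' hp hpp'
    induction p', hpp' using Nat.le_induction with
    | base =>
      intro hlen rp rp' h1 h2
      rw [h1] at h2
      exact le_of_eq (Option.some_inj.1 h2)
    | succ m hm ih =>
      intro hlen rp rp' h1 h2
      obtain ⟨rm, hrm⟩ := alive m (by omega) (by omega)
      have e1 := ih (by omega) rp rm h1 hrm
      have e2 := traj_step_bounds (show 1 ≤ m + 1 by omega) hrm h2
      omega
  -- constant stretches of the trajectory
  have rowConst : ∀ a b v, j ≤ a → b ≤ c.length → traj c i j a = some v →
      traj c i j b = some v → ∀ p, a ≤ p → p ≤ b → traj c i j p = some v := by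
    intro a b v ha hb h1 h2 p hp1 hp2
    obtain ⟨rp, hrp⟩ := alive p (by omega) (by omega)
    have e1 := mono a p ha hp1 (by omega) v rp h1 hrp
    have e2 := mono p b (by omega) hp2 hb rp v hrp h2
    have : rp = v := by omega
    rw [this] at hrp
    exact hrp
  -- at a column where the row does not increase, the column is low
  have noBumpAt : ∀ p rv, j < p → p ≤ c.length → traj c i j (p-1) = some rv →
      traj c i j p = some rv →
      hgt c p ≤ rv - 1 ∧ (hgt c p = rv - 1 → ¬ Ecol c p) ∧ 1 ≤ rv := by
    intro p rv h1 h2 htr htr'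
    have hsv0 := hs (p-1) rv htr (by omega)
    have hpos : 1 ≤ rv := traj_pos hi1 htr
    have hsv := hsv0
    rw [show p - 1 + 1 = p by omega] at hsv
    rcases hsv with ⟨ha, hb⟩ | ⟨ha, hb⟩ | ha
    · exfalso
      have h3 := traj_step_of_survive htr hsv0
      rw [show p - 1 + 1 = p by omega] at h3
      rw [if_pos ha] at h3
      rw [htr'] at h3
      have := Option.some_inj.1 h3
      omega
    · exact ⟨by omega, fun _ => hb, hpos⟩
    · exact ⟨by omega, fun hcc => by omega, hpos⟩
  obtain ⟨R, hR⟩ := alive c.length hj2 le_rfl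
  have hiR : i ≤ R := mono j c.length le_rfl hj2 le_rfl i R (traj_self c i hj1) hR
  by_cases hbump : i < R
  · -- a bump occurs : (i, j) is the box of a right extremal staircase, contradiction
    exfalso
    set cc := R - 1 with hcc
    -- discrete intermediate value property
    have ivt : ∀ v, i ≤ v → v ≤ R → ∃ p, j ≤ p ∧ p ≤ c.length ∧ traj c i j p = some v := by
      intro v hv1 hv2
      set Sv : Set ℕ := {p | j ≤ p ∧ p ≤ c.length ∧ ∃ rv, traj c i j p = some rv ∧ v ≤ rv}
        with hSv
      have hne : Sv.Nonempty := ⟨c.length, hj2, le_rfl, R, hR, hv2⟩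
      have hmem := Nat.sInf_mem hne
      obtain ⟨hms1, hms2, rms, hrms, hvle⟩ := hmem
      rcases eq_or_lt_of_le hms1 with heq | hlt
      · have htj : traj c i j (sInf Sv) = some i := by
          rw [← heq]; exact traj_self c i hj1
        have hri : rms = i := by
          rw [htj] at hrms
          exact (Option.some_inj.1 hrms).symm
        have hvi : v = i := by omega
        exact ⟨sInf Sv, hms1, hms2, by rw [htj, hvi]⟩
      · have hnot : sInf Sv - 1 ∉ Sv := Nat.notMem_of_lt_sInf (by omega)
        obtain ⟨r0, hr0⟩ := alive (sInf Sv - 1) (by omega) (by omega)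
        have hr0lt : r0 < v := by
          by_contra hcc2
          exact hnot ⟨by omega, by omega, r0, hr0, by omega⟩
        have hb := traj_step_bounds (show 1 ≤ sInf Sv by omega) hr0 hrms
        have hrv : rms = v := by omega
        exact ⟨sInf Sv, by omega, hms2, by rw [hrms, hrv]⟩
    set colF : ℕ → ℕ := fun t => sInf {p | p ≤ c.length ∧ traj c i j p = some (t+1)}
      with hcolF
    have colFacts : ∀ t, i ≤ t → t ≤ cc →
        colF t ≤ c.length ∧ traj c i j (colF t) = some (t+1) ∧ j < colF t ∧
        traj c i j (colF t - 1) = some t ∧ hgt c (colF t) = t ∧ HasLeftNb c (colF t) := by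
      intro t ht1 ht2
      have hSne : {p | p ≤ c.length ∧ traj c i j p = some (t+1)}.Nonempty := by
        obtain ⟨p, hp1, hp2, hp3⟩ := ivt (t+1) (by omega) (by omega)
        exact ⟨p, hp2, hp3⟩
      have hmem : colF t ≤ c.length ∧ traj c i j (colF t) = some (t+1) :=
        Nat.sInf_mem hSne
      have hjle : j ≤ colF t := traj_ge hmem.2
      have hjlt : j < colF t := by
        rcases eq_or_lt_of_le hjle with heq | hlt
        · exfalso
          have h0 := hmem.2
          rw [← heq, traj_self c i hj1] at h0
          have := Option.some_inj.1 h0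
          omega
        · exact hlt
      have hprev : traj c i j (colF t - 1) = some t := by
        obtain ⟨r0, hr0⟩ := alive (colF t - 1) (by omega) (by omega)
        have hb := traj_step_bounds (show 1 ≤ colF t by omega) hr0 hmem.2
        have hne : r0 ≠ t + 1 := by
          intro hcc2
          have hmem2 : colF t - 1 ∈ {p | p ≤ c.length ∧ traj c i j p = some (t+1)} :=
            ⟨by omega, by rw [hr0, hcc2]⟩
          have := Nat.sInf_le hmem2
          have hFeq : colF t = sInf {p | p ≤ c.length ∧ traj c i j p = some (t + 1)} := rfl
          omega
        have : r0 = t := by omega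
        rw [this] at hr0
        exact hr0
      have hbmp := traj_bump (show 1 ≤ colF t by omega) hprev hmem.2
      exact ⟨hmem.1, hmem.2, hjlt, hprev, hbmp.1, hbmp.2⟩
    have hicc : i ≤ cc := by omega
    have hcolmono : ∀ t, i ≤ t → t < cc → colF t < colF (t+1) := by
      intro t ht1 ht2
      by_contra hcc2
      have h1 := (colFacts t ht1 (by omega)).2.1
      have h2 := (colFacts (t+1) (by omega) (by omega)).2.1
      have := mono (colF (t+1)) (colF t) (colFacts (t+1) (by omega) (by omega)).2.2.1.le
        (by omega) (colFacts t ht1 (by omega)).1 (t+2) (t+1) h2 h1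
      omega
    -- rows inside a segment are constant
    have hseg : ∀ t, i ≤ t → t < cc → ∀ p, colF t ≤ p → p < colF (t+1) →
        traj c i j p = some (t+1) := by
      intro t ht1 ht2 p hp1 hp2
      have hF := colFacts t ht1 (by omega)
      have hF2 := colFacts (t+1) (by omega) (by omega)
      exact rowConst (colF t) (colF (t+1) - 1) (t+1) (by omega) (by omega) hF.2.1
        hF2.2.2.2.1 p hp1 (by omega)
    -- the staircase
    have hstair : IsStair c i cc colF := by
      refine ⟨hi1, hicc, ?_, ?_⟩
      · intro t ht1 ht2
        have hF := colFacts t ht1 ht2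
        exact ⟨by omega, hF.1, hF.2.2.2.2.1, hF.2.2.2.2.2⟩
      · intro t ht1 ht2
        refine ⟨hcolmono t ht1 ht2, ?_⟩
        intro p' h1 h2
        have hF := colFacts t ht1 (by omega)
        have hr1 : traj c i j p' = some (t+1) := hseg t ht1 ht2 p' (by omega) h2
        have hr0 : traj c i j (p' - 1) = some (t+1) := hseg t ht1 ht2 (p'-1) (by omega)
          (by omega)
        have hnb := noBumpAt p' (t+1) (by omega) (by
          have := (colFacts (t+1) (by omega) (by omega)).1
          omega) hr0 hr1
        have hne : hgt c p' ≠ t := by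
          intro hcc2
          exact (hnb.2.1 (by omega)) ⟨colF t, by omega, h1, by rw [hcc2, hF.2.2.2.2.1]⟩
        omega
    -- right extremality of the staircase
    have hrightext : ∀ p, colF cc < p → p ≤ c.length → hgt c p < cc := by
      intro p h1 h2
      have hF := colFacts cc hicc le_rfl
      have hRcc : R = cc + 1 := by omega
      have hr1 : traj c i j p = some (cc+1) :=
        rowConst (colF cc) c.length (cc+1) (by omega) le_rfl hF.2.1 (by rw [hR, hRcc])
          p (by omega) h2
      have hr0 : traj c i j (p-1) = some (cc+1) :=
        rowConst (colF cc) c.length (cc+1) (by omega) le_rfl hF.2.1 (by rw [hR, hRcc])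
          (p-1) (by omega) (by omega)
      have hnb := noBumpAt p (cc+1) (by omega) h2 hr0 hr1
      have hne : hgt c p ≠ cc := by
        intro hcc2
        exact (hnb.2.1 (by omega)) ⟨colF cc, by omega, h1, by rw [hcc2, hF.2.2.2.2.1]⟩
      omega
    -- columns between j and the first bump are low
    have hpre : ∀ p, j < p → p < colF i → hgt c p < i := by
      intro p h1 h2
      have hF := colFacts i le_rfl hicc
      have hr1 : traj c i j p = some i :=
        rowConst j (colF i - 1) i le_rfl (by omega) (traj_self c i hj1) hF.2.2.2.1
          p (by omega) (by omega)
      have hr0 : traj c i j (p-1) = some i :=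
        rowConst j (colF i - 1) i le_rfl (by omega) (traj_self c i hj1) hF.2.2.2.1
          (p-1) (by omega) (by omega)
      have hnb := noBumpAt p i (by omega) (by omega) hr0 hr1
      omega
    -- maximality of the staircase
    have hmaxstair : IsMaxStair c i cc colF := by
      refine ⟨hstair, ?_⟩
      rintro ⟨u', cc', col', hst', h1, h2, h3, hagree⟩
      obtain ⟨hu'1, hu'cc', hcols', hgaps'⟩ := id hst'
      rcases h3 with h3 | h3
      · -- downward extension
        have hp := hcols' (i-1) (by omega) (by omega)
        have hg := hgaps' (i-1) (by omega) (by omega)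
        set p := col' (i-1) with hpdef
        have hpcol : col' (i - 1 + 1) = colF i := by
          rw [show i - 1 + 1 = i by omega]
          exact hagree i le_rfl hicc
        have hplt : p < colF i := by
          have := hg.1
          omega
        have hpE : Ecol c p := hasLeftNb_iff.1 hp.2.2.2
        have hjF : j < colF i := (colFacts i le_rfl hicc).2.2.1
        rcases Nat.lt_trichotomy p j with hpj | hpj | hpj
        · -- j lies strictly between p and colF i : its height is too big
          have := hg.2 j hpj (by omega)
          omega
        · -- p = j : heights differ
          have := hp.2.2.1
          rw [hpj] at this
          omega
        · -- j < p < colF i : p survived, so it has no earlier equal column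
          have hr1 : traj c i j p = some i :=
            rowConst j (colF i - 1) i le_rfl (by
              have := (colFacts i le_rfl hicc).1
              omega) (traj_self c i hj1) (colFacts i le_rfl hicc).2.2.2.1
              p (by omega) (by omega)
          have hr0 : traj c i j (p-1) = some i :=
            rowConst j (colF i - 1) i le_rfl (by
              have := (colFacts i le_rfl hicc).1
              omega) (traj_self c i hj1) (colFacts i le_rfl hicc).2.2.2.1
              (p-1) (by omega) (by omega)
          have hnb := noBumpAt p i (by omega) hp.2.1 hr0 hr1
          have := hp.2.2.1
          exact (hnb.2.1 (by omega)) hpE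
      · -- upward extension
        have hp := hcols' (cc+1) (by omega) (by omega)
        have hg := hgaps' cc (by omega) (by omega)
        have hcolcc : col' cc = colF cc := hagree cc hicc le_rfl
        have := hrightext (col' (cc+1)) (by omega) hp.2.1
        have := hp.2.2.1
        omega
    -- the box (i, j) is the box of this staircase
    have hsbc : stairBoxCol c i (colF i) = j := by
      unfold stairBoxCol
      have hFj := (colFacts i le_rfl hicc).2.2.1
      have hjmem : j ∈ {p | p < colF i ∧ i ≤ hgt c p} := ⟨hFj, hi2⟩
      have hbdd : BddAbove {p | p < colF i ∧ i ≤ hgt c p} :=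
        ⟨colF i, fun x hx => hx.1.le⟩
      have hle : sSup {p | p < colF i ∧ i ≤ hgt c p} ≤ j := by
        have hmem := Nat.sSup_mem ⟨j, hjmem⟩ hbdd
        by_contra hcc2
        have := hpre (sSup {p | p < colF i ∧ i ≤ hgt c p}) (by omega) hmem.1
        have := hmem.2
        omega
      have hge := le_csSup hbdd hjmem
      omega
    exact hni ⟨i, cc, colF, ⟨hmaxstair, hrightext⟩, rfl, hsbc.symm⟩
  · -- no bump : the trajectory is flat at row i
    have hRi : R = i := by omega
    have flat : ∀ p, j ≤ p → p ≤ c.length → traj c i j p = some i :=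
      rowConst j c.length i le_rfl le_rfl (traj_self c i hj1) (by rw [hR, hRi])
    have heights : ∀ p, j < p → p ≤ c.length →
        hgt c p ≤ i - 1 ∧ (hgt c p = i - 1 → ¬ Ecol c p) := by
      intro p h1 h2
      have hnb := noBumpAt p i h1 h2 (flat (p-1) (by omega) (by omega))
        (flat p (by omega) h2)
      exact ⟨hnb.1, hnb.2.1⟩
    have hAle : cAfter c j ≤ i - 1 := cAfter_le (fun p h1 h2 => (heights p h1 h2).1)
    refine ⟨by omega, by omega, ?_⟩
    rintro hieq ⟨u', col', hres'⟩
    obtain ⟨⟨hst', -⟩, hre'⟩ := hres'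
    obtain ⟨hu'1, hu'd, hcols', -⟩ := id hst'
    have hp := hcols' (cAfter c j) hu'd le_rfl
    set C' := col' (cAfter c j) with hC'
    have hCE : Ecol c C' := hasLeftNb_iff.1 hp.2.2.2
    rcases Nat.lt_trichotomy C' j with hCj | hCj | hCj
    · have := hre' j hCj hj2
      omega
    · have := hp.2.2.1
      rw [hCj] at this
      omega
    · have hh := heights C' hCj hp.2.1
      have := hp.2.2.1
      exact (hh.2 (by omega)) hCE

end S15

/-- (i) if `S^cc` is a right extremal column staircase in `D` with
`cc` at most the maximal column height of `D`, then `b(S^cc)` is right extremal in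
`D` relative to `ℓ(D)`.  (ii) the remaining right extremal boxes of `D` are exactly
the boxes of the `c^j`-lower part of each right extremal column `C_j` (the boxes of
`C_j` in rows strictly below `R_{c^j}`), except possibly the top box
`C_j ∩ R_{c^j + 1}`, which fails to be right extremal exactly when there exists a
right extremal column staircase of depth `c^j` in `D`. -/
theorem statement15 (n : ℕ) (hn : 0 < n) (c : List ℕ) (hc : IsComposition c n) :
    (∀ u cc col, IsMaxStair c u cc col → cc ≤ maxH c →
      (∀ j', col cc < j' → j' ≤ c.length → hgt c j' < cc) →
      RExt c u (stairBoxCol c u (col u))) ∧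
    (∀ i j, IsBox c i j →
      (¬ ∃ u cc col, RExtStair c u cc col ∧ i = u ∧ j = stairBoxCol c u (col u)) →
      (RExt c i j ↔
        (cAfter c j < hgt c j ∧ cAfter c j < i ∧
          (i = cAfter c j + 1 → ¬ ∃ u col, RExtStair c u (cAfter c j) col)))) := by
  constructor
  · intro u cc col hms hcc hre
    exact S15.part_i hc hms hre
  · intro i j hbox hni
    constructor
    · intro hrext
      exact S15.part_ii_fwd hc hbox hni hrext
    · rintro ⟨hA, hB, hC⟩
      exact S15.part_ii_bwd hc hbox hA hB hC
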